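/- Let X and Y be geodesic metric spaces and let q : X → Y be a (K,C)-quasi-isometry. Suppose X is bushy with constant B > 0, meaning that for every x ∈ X the complement in X of the closed ball of radius B centered at x has at least three path components of infinite diameter. Then there is a constant B' > 0 such that Y is bushy with constant B'. -/

import Mathlib

/-- A metric space is geodesic: any two points are joined by an isometrically
embedded segment `[0, d(x,y)] → Y`. -/
def IsGeodesicSpace (Y : Type*) [MetricSpace Y] : Prop :=
  ∀ x y : Y, ∃ γ : ℝ → Y, γ 0 = x ∧ γ (dist x y) = y ∧
    ∀ s ∈ Set.Icc (0 : ℝ) (dist x y), ∀ t ∈ Set.Icc (0 : ℝ) (dist x y),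
      dist (γ s) (γ t) = |s - t|

/-- A metric space `X` is bushy with constant `B` if, for every `x ∈ X`, the
complement of the closed ball of radius `B` about `x` has at least three path
components of infinite diameter. -/
def BushyMetricSpace (X : Type*) [MetricSpace X] (B : ℝ) : Prop :=
  ∀ x : X, ∃ z₁ z₂ z₃ : {y : X // B < dist x y},
    ¬ Joined z₁ z₂ ∧ ¬ Joined z₁ z₃ ∧ ¬ Joined z₂ z₃ ∧
    (∀ n : ℕ, ∃ w, Joined z₁ w ∧ (n : ℝ) < dist (z₁ : X) (w : X)) ∧
    (∀ n : ℕ, ∃ w, Joined z₂ w ∧ (n : ℝ) < dist (z₂ : X) (w : X)) ∧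
    (∀ n : ℕ, ∃ w, Joined z₃ w ∧ (n : ℝ) < dist (z₃ : X) (w : X))

section BushyAux

variable {Z : Type*} [MetricSpace Z]

/-- From a geodesic we can build a `Path` all of whose points are far from any
center `c`, quantitatively. -/
lemma geodesic_path_exists (hZ : IsGeodesicSpace Z) (a b : Z) :
    ∃ p : Path a b, ∀ t : unitInterval, ∀ c : Z,
      max (dist c a) (dist c b) - dist a b ≤ dist c (p t) := by
  obtain ⟨γ, h0, h1, hiso⟩ := hZ a b
  set d := dist a b with hdd
  have hd0 : 0 ≤ d := dist_nonneg
  have hmem : ∀ t : unitInterval, ((t : ℝ) * d) ∈ Set.Icc (0:ℝ) d := by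
    intro t
    constructor
    · exact mul_nonneg t.2.1 hd0
    · calc (t:ℝ) * d ≤ 1 * d := mul_le_mul_of_nonneg_right t.2.2 hd0
        _ = d := one_mul d
  have hcont : Continuous fun t : unitInterval => γ ((t : ℝ) * d) := by
    apply LipschitzWith.continuous (K := d.toNNReal)
    apply LipschitzWith.of_dist_le_mul
    intro s t
    have := hiso ((s:ℝ)*d) (hmem s) ((t:ℝ)*d) (hmem t)
    rw [this]
    have hst : dist s t = |(s:ℝ) - (t:ℝ)| := Subtype.dist_eq s t
    rw [hst]
    have : |(s:ℝ) * d - (t:ℝ) * d| = |(s:ℝ) - t| * d := by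
      rw [← sub_mul, abs_mul, abs_of_nonneg hd0]
    rw [this, Real.coe_toNNReal d hd0]
    ring_nf
    exact le_refl _
  refine ⟨{ toFun := fun t => γ ((t:ℝ) * d),
            continuous_toFun := hcont,
            source' := by simp [h0],
            target' := by simpa using h1 }, ?_⟩
  intro t c
  have h1' : dist a (γ ((t:ℝ)*d)) = (t:ℝ)*d := by
    rw [← h0]
    rw [hiso 0 ⟨le_refl _, hd0⟩ ((t:ℝ)*d) (hmem t)]
    rw [abs_of_nonpos (by linarith [(hmem t).1])]
    ring
  have h2' : dist b (γ ((t:ℝ)*d)) = d - (t:ℝ)*d := by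
    rw [← h1]
    rw [hiso d ⟨hd0, le_refl _⟩ ((t:ℝ)*d) (hmem t)]
    rw [abs_of_nonneg (by linarith [(hmem t).2])]
  simp only [Path.coe_mk_mk]
  rcases max_cases (dist c a) (dist c b) with ⟨heq, _⟩ | ⟨heq, _⟩ <;> rw [heq]
  · have := dist_triangle c a (γ ((t:ℝ)*d))
    have ht := (hmem t).1
    rw [h1'] at this
    have h3 : dist c (γ ((t:ℝ)*d)) ≥ dist c a - (t:ℝ)*d := by
      linarith [dist_triangle c (γ ((t:ℝ)*d)) a, dist_comm a (γ ((t:ℝ)*d)) ▸ h1']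
    linarith [(hmem t).2]
  · have h3 : dist c (γ ((t:ℝ)*d)) ≥ dist c b - (d - (t:ℝ)*d) := by
      have := dist_triangle c (γ ((t:ℝ)*d)) b
      rw [dist_comm (γ ((t:ℝ)*d)) b, h2'] at this
      linarith
    linarith [(hmem t).1, mul_nonneg t.2.1 hd0]

/-- Joining two far points through a geodesic, inside the complement of a ball. -/
lemma geodesic_joined_subtype (hZ : IsGeodesicSpace Z) (c : Z) (r : ℝ) (a b : Z)
    (ha : r < dist c a) (hb : r < dist c b)
    (hd : r + dist a b < max (dist c a) (dist c b)) :
    Joined (⟨a, ha⟩ : {v : Z // r < dist c v}) ⟨b, hb⟩ := by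
  obtain ⟨p, hp⟩ := geodesic_path_exists hZ a b
  have hpt : ∀ t : unitInterval, r < dist c (p t) := fun t => by linarith [hp t c]
  refine ⟨{ toFun := fun t => ⟨p t, hpt t⟩,
            continuous_toFun := p.continuous.subtype_mk _,
            source' := by simp,
            target' := by simp }⟩

/-- Chains of nearby far points are joined in the complement of a ball. -/
lemma chain_joined (hZ : IsGeodesicSpace Z) (c : Z) (r L D : ℝ)
    (hLD : r + L < D) (f : ℕ → Z) (n : ℕ)
    (hfar : ∀ k ≤ n, D ≤ dist c (f k))
    (hstep : ∀ k < n, dist (f k) (f (k+1)) ≤ L) :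
    ∀ k ≤ n, ∀ (h0 : r < dist c (f 0)) (hk : r < dist c (f k)),
      Joined (⟨f 0, h0⟩ : {v : Z // r < dist c v}) ⟨f k, hk⟩ := by
  intro k
  induction k with
  | zero => intro _ h0 hk; exact Joined.refl _
  | succ m ih =>
    intro hm1 h0 hk1
    have hmn : m ≤ n := by omega
    have hL0 : 0 ≤ L := le_trans dist_nonneg (hstep m (by omega))
    have hrD : r < D := by linarith
    have hm : r < dist c (f m) := lt_of_lt_of_le hrD (hfar m hmn)
    have step := geodesic_joined_subtype hZ c r (f m) (f (m+1)) hm hk1 (by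
      calc r + dist (f m) (f (m+1)) ≤ r + L := by linarith [hstep m (by omega)]
        _ < D := hLD
        _ ≤ dist c (f m) := hfar m hmn
        _ ≤ max (dist c (f m)) (dist c (f (m+1))) := le_max_left _ _)
    exact (ih hmn h0 hm).trans step

/-- Discretization of a path in a metric space. -/
lemma discretize {W : Type*} [MetricSpace W] {a b : W} (p : Path a b) :
    ∃ n : ℕ, 0 < n ∧ ∀ s t : unitInterval, dist s t ≤ 1 / n → dist (p s) (p t) ≤ 1 := by
  have huc : UniformContinuous p := CompactSpace.uniformContinuous_of_continuous p.continuous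
  obtain ⟨δ, hδ, hd⟩ := Metric.uniformContinuous_iff.mp huc 1 one_pos
  refine ⟨⌈1/δ⌉₊ + 1, Nat.succ_pos _, fun s t hst => ?_⟩
  have hn : (1:ℝ) / (⌈1/δ⌉₊ + 1 : ℕ) < δ := by
    rw [div_lt_iff₀ (by positivity)]
    have h1 : (1:ℝ)/δ ≤ ⌈1/δ⌉₊ := Nat.le_ceil _
    have h2 : ((⌈1/δ⌉₊ : ℝ)) < ((⌈1/δ⌉₊ + 1 : ℕ) : ℝ) := by push_cast; linarith
    calc (1:ℝ) = (1/δ) * δ := by field_simp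
      _ ≤ (⌈1/δ⌉₊ : ℝ) * δ := by nlinarith
      _ < δ * ((⌈1/δ⌉₊ + 1 : ℕ) : ℝ) := by nlinarith
  exact le_of_lt (hd (lt_of_le_of_lt hst hn))

/-- Every point of a path is joined to the source. -/
lemma path_point_joined {W : Type*} [TopologicalSpace W] {a b : W} (γ : Path a b)
    (t : unitInterval) : Joined a (γ t) := by
  have h1 : γ.extend ((0:ℝ) ⊓ (t:ℝ)) = a := by
    rw [min_eq_left t.2.1]; exact γ.extend_zero
  have h2 : γ.extend t = γ t := γ.extend_extends' t
  exact ⟨(γ.truncate 0 t).cast h1.symm h2.symm⟩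

/-- Key step: from a far-components basepoint `z` at scale `B`, produce a point `w₀`
far from `x` in the same `B`-component, whose component at scale `R` is unbounded. -/
lemma key_one {X : Type*} [MetricSpace X] (hX : IsGeodesicSpace X)
    (B : ℝ) (hB : 0 < B) (hbushy : BushyMetricSpace X B)
    (x : X) (R : ℝ) (hBR : B ≤ R)
    (z : {u : X // B < dist x u})
    (hz : ∀ n : ℕ, ∃ w, Joined z w ∧ (n : ℝ) < dist (z : X) (w : X)) :
    ∃ (w₀ : X) (hw₀R : R < dist x w₀),
      Joined z ⟨w₀, lt_of_le_of_lt hBR hw₀R⟩ ∧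
      ∀ n : ℕ, ∃ (w : X) (hw : R < dist x w),
        Joined (⟨w₀, hw₀R⟩ : {u : X // R < dist x u}) ⟨w, hw⟩ ∧ (n : ℝ) < dist w₀ w := by
  classical
  set M : ℝ := R + 2*B + 2 with hM
  -- a point w in the component of z with dist x w > M
  obtain ⟨w, hjw, hdw⟩ := hz (⌈M + dist x (z : X)⌉₊)
  have hMw : M < dist x (w : X) := by
    have h1 : M + dist x (z:X) ≤ (⌈M + dist x (z:X)⌉₊ : ℝ) := Nat.le_ceil _
    have h2 := dist_triangle (z:X) x (w:X)
    have h3 := dist_comm x (z:X)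
    linarith [hdw]
  have hBM : B < M := by linarith
  -- bushiness at w
  obtain ⟨z₁, z₂, z₃, h12, h13, h23, hu1, hu2, hu3⟩ := hbushy (w : X)
  -- any two points of the ball B(x,R) are joined in the complement of B(w,B)
  have ball_conn : ∀ (v₁ v₂ : X) (h1 : B < dist (w:X) v₁) (h2 : B < dist (w:X) v₂),
      dist x v₁ ≤ R → dist x v₂ ≤ R →
      Joined (⟨v₁, h1⟩ : {u : X // B < dist (w:X) u}) ⟨v₂, h2⟩ := by
    intro v₁ v₂ h1 h2 hv₁ hv₂
    have hx' : B < dist (w:X) x := by rw [dist_comm]; linarith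
    have step1 : Joined (⟨v₁, h1⟩ : {u : X // B < dist (w:X) u}) ⟨x, hx'⟩ := by
      apply geodesic_joined_subtype hX (w:X) B v₁ x h1 hx'
      have : dist (w:X) x = dist x (w:X) := dist_comm _ _
      calc B + dist v₁ x ≤ B + R := by linarith [dist_comm v₁ x ▸ hv₁, dist_comm x v₁]
        _ < dist (w:X) x := by rw [this]; linarith
        _ ≤ max (dist (w:X) v₁) (dist (w:X) x) := le_max_right _ _
    have step2 : Joined (⟨x, hx'⟩ : {u : X // B < dist (w:X) u}) ⟨v₂, h2⟩ := by
      apply geodesic_joined_subtype hX (w:X) B x v₂ hx' h2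
      calc B + dist x v₂ ≤ B + R := by linarith
        _ < dist (w:X) x := by rw [dist_comm]; linarith
        _ ≤ max (dist (w:X) x) (dist (w:X) v₂) := le_max_left _ _
    exact step1.trans step2
  -- at most one of z₁ z₂ z₃ is joined to a point of the ball B(x,R);
  -- pick z' not joined to the ball
  have pick : ∃ z' : {u : X // B < dist (w:X) u},
      (∀ n : ℕ, ∃ w', Joined z' w' ∧ (n : ℝ) < dist (z' : X) (w' : X)) ∧
      (∀ (v : X) (hv : B < dist (w:X) v), Joined z' ⟨v, hv⟩ → R < dist x v) := by
    by_cases P1 : ∃ (v : X) (hv : B < dist (w:X) v), Joined z₁ ⟨v, hv⟩ ∧ dist x v ≤ R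
    · -- then z₂ works (if z₂ also touched the ball we'd get Joined z₁ z₂)
      refine ⟨z₂, hu2, ?_⟩
      intro v hv hj
      by_contra hle
      push_neg at hle
      obtain ⟨v₁, hv₁, hj₁, hb₁⟩ := P1
      exact h12 (hj₁.trans ((ball_conn v₁ v hv₁ hv hb₁ hle).trans hj.symm))
    · refine ⟨z₁, hu1, ?_⟩
      intro v hv hj
      by_contra hle
      push_neg at hle
      exact P1 ⟨v, hv, hj, hle⟩
  obtain ⟨z', hu', hfar'⟩ := pick
  -- the component A of z' in the complement of B(w,B)
  set A : Set X := {v : X | ∃ hv : B < dist (w:X) v, Joined z' ⟨v, hv⟩} with hA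
  -- there is a point of A at distance < B + 1 from w
  have hbdry : ∃ a₀ ∈ A, dist (w:X) a₀ < B + 1 := by
    by_contra hcon
    push_neg at hcon
    -- then A is clopen, contradicting connectedness
    have : PathConnectedSpace X := by
      refine ⟨⟨x⟩, fun a b => ⟨(geodesic_path_exists hX a b).choose⟩⟩
    have hopen : IsOpen A := by
      rw [Metric.isOpen_iff]
      rintro a ⟨ha, hja⟩
      refine ⟨dist (w:X) a - B, by linarith, ?_⟩
      intro v hv
      rw [Metric.mem_ball] at hv
      -- hv : dist v a < dist w a - B
      have hv' : B < dist (w:X) v := by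
        have h4 := dist_triangle (w:X) a v
        have h5 := dist_triangle (w:X) v a
        linarith
      refine ⟨hv', hja.trans ?_⟩
      apply geodesic_joined_subtype hX (w:X) B a v ha hv'
      have h6 : dist a v = dist v a := dist_comm a v
      calc B + dist a v < dist (w:X) a := by linarith
        _ ≤ max (dist (w:X) a) (dist (w:X) v) := le_max_left _ _
    have hclosed : IsClosed A := by
      rw [← isOpen_compl_iff, Metric.isOpen_iff]
      intro v hvc
      by_cases hv : B < dist (w:X) v
      · refine ⟨dist (w:X) v - B, by linarith, ?_⟩
        intro u hu
        rw [Metric.mem_ball] at hu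
        rintro ⟨hu', hju⟩
        apply hvc
        have hj2 : Joined (⟨u, hu'⟩ : {t : X // B < dist (w:X) t}) ⟨v, hv⟩ := by
          apply geodesic_joined_subtype hX (w:X) B u v hu' hv
          calc B + dist u v < dist (w:X) v := by linarith
            _ ≤ max (dist (w:X) u) (dist (w:X) v) := le_max_right _ _
        exact ⟨hv, hju.trans hj2⟩
      · refine ⟨1, one_pos, ?_⟩
        intro u hu
        rw [Metric.mem_ball] at hu
        rintro ⟨hu', hju⟩
        have := hcon u ⟨hu', hju⟩
        have := dist_triangle (w:X) v u
        push_neg at hv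
        rw [dist_comm u v] at hu
        linarith [dist_triangle (w:X) u v]
    have hne : A.Nonempty := ⟨(z' : X), z'.2, by
      exact Joined.refl _⟩
    have huniv : A = Set.univ := IsClopen.eq_univ ⟨hclosed, hopen⟩ hne
    have hwA : (w:X) ∈ A := huniv ▸ Set.mem_univ _
    obtain ⟨hwc, _⟩ := hwA
    simp at hwc
    linarith
  obtain ⟨a₀, ⟨ha₀B, hja₀⟩, ha₀d⟩ := hbdry
  -- a₀ is far from x
  have hxa₀ : R + B + 1 < dist x a₀ := by
    have := dist_triangle x a₀ (w:X)
    rw [dist_comm a₀ (w:X)] at this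
    linarith
  have hw₀R : R < dist x a₀ := by linarith
  refine ⟨a₀, hw₀R, ?_, ?_⟩
  · -- z is joined to a₀ at scale B (center x) : z ~ w ~ a₀
    have hwB : B < dist x (w:X) := by linarith
    have hstep : Joined (⟨(w:X), hwB⟩ : {u : X // B < dist x u})
        ⟨a₀, lt_of_le_of_lt hBR hw₀R⟩ := by
      apply geodesic_joined_subtype hX x B (w:X) a₀ hwB _
      · rw [dist_comm (w:X) a₀]
        calc B + dist a₀ (w:X) < B + (B + 1) := by
              rw [dist_comm a₀ (w:X)]; linarith
          _ < dist x (w:X) := by linarith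
          _ ≤ max (dist x (w:X)) (dist x a₀) := le_max_left _ _
    have : Joined z (⟨(w:X), hwB⟩ : {u : X // B < dist x u}) := by
      have : w = (⟨(w:X), hwB⟩ : {u : X // B < dist x u}) := Subtype.ext rfl
      exact this ▸ hjw
    exact this.trans hstep
  · -- unboundedness of the R-component of a₀
    intro n
    obtain ⟨w', hjw', hdw'⟩ := hu' (n + ⌈dist (z' : X) a₀⌉₊)
    -- every point joined to z' (scale B around w) is at distance > R from x;
    -- transfer the path a₀ → w' into the subtype at scale R around x
    have hja₀' : Joined z' (⟨a₀, ha₀B⟩ : {u : X // B < dist (w:X) u}) := hja₀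
    have hjoin : Joined (⟨a₀, ha₀B⟩ : {u : X // B < dist (w:X) u}) w' :=
      hja₀'.symm.trans hjw'
    obtain ⟨γ⟩ := hjoin
    have hptfar : ∀ t : unitInterval, R < dist x ((γ t) : X) := by
      intro t
      have : Joined z' (γ t) := hja₀'.trans (path_point_joined γ t)
      exact hfar' ((γ t) : X) (γ t).2 (by
        have : Joined z' ⟨((γ t) : X), (γ t).2⟩ := by
          simpa using this
        exact this)
    have hw'R : R < dist x (w' : X) := by
      have := hptfar 1
      simpa [γ.target] using this
    refine ⟨(w' : X), hw'R, ?_, ?_⟩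
    · -- the transferred path
      refine ⟨{ toFun := fun t => ⟨((γ t) : X), hptfar t⟩,
                continuous_toFun := (continuous_subtype_val.comp γ.continuous).subtype_mk _,
                source' := by simp [γ.source],
                target' := by simp [γ.target] }⟩
    · have h1 : (n : ℝ) + dist (z' : X) a₀ ≤ ((n + ⌈dist (z' : X) a₀⌉₊ : ℕ) : ℝ) := by
        push_cast
        linarith [Nat.le_ceil (dist (z' : X) a₀)]
      have h2 := dist_triangle (z' : X) a₀ (w' : X)
      have h3 : dist a₀ (w' : X) = dist a₀ (w' : X) := rfl
      linarith [hdw']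

/-- discretization sample points: `tk n k = min k n / n ∈ [0,1]`. -/
noncomputable def tk (n : ℕ) (k : ℕ) : unitInterval :=
  ⟨(min k n : ℕ) / n, by
    constructor
    · positivity
    · by_cases h : n = 0
      · simp [h]
      · rw [div_le_one (by positivity : (0:ℝ) < (n:ℕ))]
        exact_mod_cast Nat.cast_le.mpr (min_le_right k n)⟩

lemma tk_zero (n : ℕ) : tk n 0 = 0 := by
  simp [tk]

lemma tk_last (n : ℕ) (hn : 0 < n) : tk n n = 1 := by
  simp only [tk, min_self]
  apply Subtype.ext
  simp only [Set.Icc.coe_one]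
  field_simp

lemma tk_step (n : ℕ) (hn : 0 < n) (k : ℕ) (hk : k < n) :
    dist (tk n k) (tk n (k+1)) ≤ 1 / n := by
  have h1 : min k n = k := min_eq_left (le_of_lt hk)
  have h2 : min (k+1) n = k+1 := min_eq_left hk
  rw [Subtype.dist_eq]
  simp only [tk, h1, h2]
  rw [Real.dist_eq]
  push_cast
  have hne : (0:ℝ) < (n:ℕ) := by positivity
  have h3 : (k:ℝ)/(n:ℕ) - ((k:ℝ)+1)/(n:ℕ) = -(1/(n:ℕ)) := by field_simp; ring
  rw [h3, abs_neg, abs_of_nonneg (by positivity)]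


/-- Push an X-join at scale R forward to a Y-join at scale B'. -/
lemma pushfwd_lemma {X Y : Type*} [MetricSpace X] [MetricSpace Y]
    (hY : IsGeodesicSpace Y) (q : X → Y) (K C : ℝ) (hK : 1 ≤ K) (hC : 0 ≤ C)
    (hqi : ∀ x₁ x₂ : X, dist (q x₁) (q x₂) ≤ K * dist x₁ x₂ + C)
    (x : X) (y : Y) (B' R : ℝ)
    (himg : ∀ w : X, R < dist x w → B' + K + C + 1 ≤ dist y (q w))
    (wa wb : X) (hwa : R < dist x wa) (hwb : R < dist x wb)
    (hja : B' < dist y (q wa)) (hjb : B' < dist y (q wb))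
    (hj : Joined (⟨wa, hwa⟩ : {u : X // R < dist x u}) ⟨wb, hwb⟩) :
    Joined (⟨q wa, hja⟩ : {v : Y // B' < dist y v}) ⟨q wb, hjb⟩ := by
  have hK0 : (0:ℝ) < K := lt_of_lt_of_le one_pos hK
  obtain ⟨γ⟩ := hj
  obtain ⟨n, hn, hγ⟩ := discretize γ
  set g : ℕ → Y := fun k => q ((γ (tk n k)) : X) with hg
  have hstep : ∀ k < n, dist (g k) (g (k+1)) ≤ K + C := by
    intro k hk
    have h1 := hqi ((γ (tk n k)) : X) ((γ (tk n (k+1))) : X)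
    have h2 : dist ((γ (tk n k)) : X) ((γ (tk n (k+1))) : X) ≤ 1 := by
      have h := hγ (tk n k) (tk n (k+1)) (tk_step n hn k hk)
      rwa [Subtype.dist_eq] at h
    have h3 : K * dist ((γ (tk n k)) : X) ((γ (tk n (k+1))) : X) ≤ K := by
      nlinarith
    simp only [hg]
    linarith
  have hfar : ∀ k ≤ n, B' + K + C + 1 ≤ dist y (g k) := by
    intro k _
    exact himg _ (γ (tk n k)).2
  have hcond : B' + (K + C) < B' + K + C + 1 := by linarith
  have h0' : B' < dist y (g 0) :=
    lt_of_lt_of_le (by linarith) (hfar 0 (Nat.zero_le n))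
  have hn' : B' < dist y (g n) :=
    lt_of_lt_of_le (by linarith) (hfar n (le_refl n))
  have hcj := chain_joined hY y B' (K + C) (B' + K + C + 1) hcond g n hfar hstep
    n (le_refl n) h0' hn'
  have hga : g 0 = q wa := by simp only [hg, tk_zero, γ.source]
  have hgb : g n = q wb := by simp only [hg, tk_last n hn, γ.target]
  rw [show (⟨g 0, h0'⟩ : {v : Y // B' < dist y v}) = ⟨q wa, hja⟩ from Subtype.ext hga,
      show (⟨g n, hn'⟩ : {v : Y // B' < dist y v}) = ⟨q wb, hjb⟩ from Subtype.ext hgb] at hcj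
  exact hcj

/-- Pull back a Y-join at scale B' to an X-join at scale B. -/
lemma pullback_lemma {X Y : Type*} [MetricSpace X] [MetricSpace Y]
    (hX : IsGeodesicSpace X) (q : X → Y) (K C : ℝ) (hK : 1 ≤ K) (hC : 0 ≤ C)
    (lowX : ∀ a b : X, dist a b ≤ K * (dist (q a) (q b) + C))
    (upX : ∀ a b : X, (dist (q a) (q b) - C) / K ≤ dist a b)
    (honto : ∀ v : Y, ∃ u : X, dist v (q u) ≤ C)
    (x : X) (y : Y) (hxy : dist y (q x) ≤ C) (B B' : ℝ)
    (hcond : B + K * (1 + 3 * C) < (B' - 3 * C) / K)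
    (wa wb : X) (hwa : B < dist x wa) (hwb : B < dist x wb)
    (hja : B' < dist y (q wa)) (hjb : B' < dist y (q wb))
    (hj : Joined (⟨q wa, hja⟩ : {v : Y // B' < dist y v}) ⟨q wb, hjb⟩) :
    Joined (⟨wa, hwa⟩ : {u : X // B < dist x u}) ⟨wb, hwb⟩ := by
  classical
  have hK0 : (0:ℝ) < K := lt_of_lt_of_le one_pos hK
  obtain ⟨p⟩ := hj
  obtain ⟨n, hn, hp⟩ := discretize p
  set f : ℕ → X := fun k =>
    if k = 0 then wa else if n ≤ k then wb
    else Classical.choose (honto ((p (tk n k)) : Y)) with hf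
  have hf0 : f 0 = wa := by simp [hf]
  have hfn : f n = wb := by simp [hf, hn.ne']
  have hfk : ∀ k, k ≠ 0 → ¬ n ≤ k →
      f k = Classical.choose (honto ((p (tk n k)) : Y)) := by
    intro k hk1 hk2; simp [hf, hk1, hk2]
  have hqf : ∀ k ≤ n, dist ((p (tk n k)) : Y) (q (f k)) ≤ C := by
    intro k hk
    rcases Nat.eq_zero_or_pos k with rfl | hkpos
    · rw [hf0, tk_zero, p.source]
      simpa using hC
    · by_cases hkn : n ≤ k
      · have hkeq : k = n := le_antisymm hk hkn
        rw [hkeq, hfn, tk_last n hn, p.target]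
        simpa using hC
      · rw [hfk k (by omega) hkn]
        exact Classical.choose_spec (honto ((p (tk n k)) : Y))
  have hstep : ∀ k < n, dist (f k) (f (k+1)) ≤ K * (1 + 3 * C) := by
    intro k hk
    have h1 := lowX (f k) (f (k+1))
    have h2 : dist (q (f k)) (q (f (k+1))) ≤ 1 + 2 * C := by
      have ha := hqf k (le_of_lt hk)
      have hb := hqf (k+1) hk
      have hc : dist ((p (tk n k)) : Y) ((p (tk n (k+1))) : Y) ≤ 1 := by
        have h := hp (tk n k) (tk n (k+1)) (tk_step n hn k hk)
        rwa [Subtype.dist_eq] at h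
      have h4 := dist_triangle (q (f k)) ((p (tk n k)) : Y) (q (f (k+1)))
      have h5 := dist_triangle ((p (tk n k)) : Y) ((p (tk n (k+1))) : Y) (q (f (k+1)))
      rw [dist_comm (q (f k)) ((p (tk n k)) : Y)] at h4
      linarith
    nlinarith
  have hfar : ∀ k ≤ n, (B' - 3 * C) / K ≤ dist x (f k) := by
    intro k hk
    have h1 := upX x (f k)
    have h2 : B' - 2 * C ≤ dist (q x) (q (f k)) := by
      have ha := hqf k hk
      have hb : B' < dist y ((p (tk n k)) : Y) := (p (tk n k)).2
      -- lower bound dist y (q (f k))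
      have h5 := dist_triangle y ((p (tk n k)) : Y) (q (f k))
      have h7 := dist_triangle y (q (f k)) ((p (tk n k)) : Y)
      have h8 : dist (q (f k)) ((p (tk n k)) : Y) = dist ((p (tk n k)) : Y) (q (f k)) :=
        dist_comm _ _
      have hyfk : B' - C ≤ dist y (q (f k)) := by linarith
      -- then lower bound dist (q x) (q (f k))
      have h6 := dist_triangle y (q x) (q (f k))
      linarith
    have hdivle : (B' - 3 * C) / K ≤ (dist (q x) (q (f k)) - C) / K :=
      (div_le_div_iff_of_pos_right hK0).mpr (by linarith)
    exact le_trans hdivle h1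
  have h0' : B < dist x (f 0) := by rw [hf0]; exact hwa
  have hn' : B < dist x (f n) := by rw [hfn]; exact hwb
  have hcj := chain_joined hX x B (K * (1 + 3 * C)) ((B' - 3 * C) / K) hcond f n hfar hstep
    n (le_refl n) h0' hn'
  rw [show (⟨f 0, h0'⟩ : {u : X // B < dist x u}) = ⟨wa, hwa⟩ from Subtype.ext hf0,
      show (⟨f n, hn'⟩ : {u : X // B < dist x u}) = ⟨wb, hwb⟩ from Subtype.ext hfn] at hcj
  exact hcj

end BushyAux

/-- **(Manning, Remark 4.15.)** Bushiness is a quasi-isometry invariant of geodesic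
metric spaces: if `q : X → Y` is a `(K,C)`-quasi-isometry and `X` is bushy with
constant `B > 0`, then `Y` is bushy with some constant `B' > 0`. -/

theorem bushy_quasiisometry_invariant
    {X Y : Type*} [MetricSpace X] [MetricSpace Y]
    (hX : IsGeodesicSpace X) (hY : IsGeodesicSpace Y)
    (K C : ℝ) (hK : 1 ≤ K) (hC : 0 ≤ C) (q : X → Y)
    (hqi : ∀ x₁ x₂ : X,
      dist x₁ x₂ / K - C ≤ dist (q x₁) (q x₂) ∧
      dist (q x₁) (q x₂) ≤ K * dist x₁ x₂ + C)
    (honto : ∀ y : Y, ∃ x : X, dist y (q x) ≤ C)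
    (B : ℝ) (hB : 0 < B) (hbushy : BushyMetricSpace X B) :
    ∃ B' : ℝ, 0 < B' ∧ BushyMetricSpace Y B' := by
  classical
  have hK0 : (0:ℝ) < K := lt_of_lt_of_le one_pos hK
  obtain ⟨B', hB'def⟩ : ∃ v : ℝ, v = K * (B + K * (1 + 3 * C)) + 3 * C + 1 := ⟨_, rfl⟩
  obtain ⟨R, hRdef⟩ : ∃ v : ℝ, v = K * (B' + K + 3 * C + 1) := ⟨_, rfl⟩
  have hKC : (0:ℝ) ≤ K * (1 + 3 * C) := mul_nonneg (le_of_lt hK0) (by linarith)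
  have h1' : (0:ℝ) < B + K * (1 + 3 * C) := by linarith
  have hB'pos : 0 < B' := by
    rw [hB'def]; nlinarith [mul_pos hK0 h1']
  have hB'B : B ≤ B' := by
    rw [hB'def]; nlinarith [mul_le_mul_of_nonneg_right hK (le_of_lt h1')]
  have hRB' : B' ≤ R := by
    rw [hRdef]
    nlinarith [mul_le_mul_of_nonneg_right hK
      (show (0:ℝ) ≤ B' + K + 3 * C + 1 by nlinarith)]
  have hBR : B ≤ R := le_trans hB'B hRB'
  have hRK : R / K = B' + K + 3 * C + 1 := by
    rw [hRdef, mul_comm, mul_div_assoc, div_self hK0.ne', mul_one]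
  have hcond : B + K * (1 + 3 * C) < (B' - 3 * C) / K := by
    rw [lt_div_iff₀ hK0, hB'def]
    nlinarith
  have lowX : ∀ a b : X, dist a b ≤ K * (dist (q a) (q b) + C) := by
    intro a b
    have h := (hqi a b).1
    have h2 : dist a b / K ≤ dist (q a) (q b) + C := by linarith
    calc dist a b = K * (dist a b / K) := by field_simp
      _ ≤ K * (dist (q a) (q b) + C) := by nlinarith
  have upX : ∀ a b : X, (dist (q a) (q b) - C) / K ≤ dist a b := by
    intro a b
    have h := (hqi a b).2
    rw [div_le_iff₀ hK0]
    nlinarith [dist_nonneg (x := a) (y := b)]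
  refine ⟨B', hB'pos, ?_⟩
  intro y
  obtain ⟨x, hxy⟩ := honto y
  obtain ⟨z₁, z₂, z₃, h12, h13, h23, hu1, hu2, hu3⟩ := hbushy x
  obtain ⟨w₁, hw₁R, hjz₁, hU₁⟩ := key_one hX B hB hbushy x R hBR z₁ hu1
  obtain ⟨w₂, hw₂R, hjz₂, hU₂⟩ := key_one hX B hB hbushy x R hBR z₂ hu2
  obtain ⟨w₃, hw₃R, hjz₃, hU₃⟩ := key_one hX B hB hbushy x R hBR z₃ hu3
  have himg : ∀ w : X, R < dist x w → B' + K + C + 1 ≤ dist y (q w) := by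
    intro w hw
    have h0 := (hqi x w).1
    have hdiv : R / K ≤ dist x w / K := by gcongr
    have h4 : dist (q x) (q w) - C ≤ dist y (q w) := by
      have h5 := dist_triangle (q x) y (q w)
      rw [dist_comm (q x) y] at h5
      linarith
    rw [hRK] at hdiv
    linarith
  have hy₁ : B' < dist y (q w₁) := by linarith [himg w₁ hw₁R]
  have hy₂ : B' < dist y (q w₂) := by linarith [himg w₂ hw₂R]
  have hy₃ : B' < dist y (q w₃) := by linarith [himg w₃ hw₃R]
  have hqiu : ∀ x₁ x₂ : X, dist (q x₁) (q x₂) ≤ K * dist x₁ x₂ + C := fun a b => (hqi a b).2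
  refine ⟨⟨q w₁, hy₁⟩, ⟨q w₂, hy₂⟩, ⟨q w₃, hy₃⟩, ?_, ?_, ?_, ?_, ?_, ?_⟩
  · intro hj
    exact h12 ((hjz₁.trans (pullback_lemma hX q K C hK hC lowX upX honto x y hxy B B' hcond
      w₁ w₂ (lt_of_le_of_lt hBR hw₁R) (lt_of_le_of_lt hBR hw₂R) hy₁ hy₂ hj)).trans hjz₂.symm)
  · intro hj
    exact h13 ((hjz₁.trans (pullback_lemma hX q K C hK hC lowX upX honto x y hxy B B' hcond
      w₁ w₃ (lt_of_le_of_lt hBR hw₁R) (lt_of_le_of_lt hBR hw₃R) hy₁ hy₃ hj)).trans hjz₃.symm)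
  · intro hj
    exact h23 ((hjz₂.trans (pullback_lemma hX q K C hK hC lowX upX honto x y hxy B B' hcond
      w₂ w₃ (lt_of_le_of_lt hBR hw₂R) (lt_of_le_of_lt hBR hw₃R) hy₂ hy₃ hj)).trans hjz₃.symm)
  · intro m
    obtain ⟨w, hwR, hjoin, hdist⟩ := hU₁ (⌈K * ((m:ℝ) + C)⌉₊)
    refine ⟨⟨q w, by linarith [himg w hwR]⟩,
      pushfwd_lemma hY q K C hK hC hqiu x y B' R himg w₁ w hw₁R hwR hy₁
        (by linarith [himg w hwR]) hjoin, ?_⟩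
    have h1 := (hqi w₁ w).1
    have h2 : K * ((m:ℝ) + C) ≤ (⌈K * ((m:ℝ) + C)⌉₊ : ℝ) := Nat.le_ceil _
    have h3 : (m:ℝ) + C < dist w₁ w / K := by
      rw [lt_div_iff₀ hK0]; nlinarith
    show (m:ℝ) < dist (q w₁) (q w)
    linarith
  · intro m
    obtain ⟨w, hwR, hjoin, hdist⟩ := hU₂ (⌈K * ((m:ℝ) + C)⌉₊)
    refine ⟨⟨q w, by linarith [himg w hwR]⟩,
      pushfwd_lemma hY q K C hK hC hqiu x y B' R himg w₂ w hw₂R hwR hy₂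
        (by linarith [himg w hwR]) hjoin, ?_⟩
    have h1 := (hqi w₂ w).1
    have h2 : K * ((m:ℝ) + C) ≤ (⌈K * ((m:ℝ) + C)⌉₊ : ℝ) := Nat.le_ceil _
    have h3 : (m:ℝ) + C < dist w₂ w / K := by
      rw [lt_div_iff₀ hK0]; nlinarith
    show (m:ℝ) < dist (q w₂) (q w)
    linarith
  · intro m
    obtain ⟨w, hwR, hjoin, hdist⟩ := hU₃ (⌈K * ((m:ℝ) + C)⌉₊)
    refine ⟨⟨q w, by linarith [himg w hwR]⟩,
      pushfwd_lemma hY q K C hK hC hqiu x y B' R himg w₃ w hw₃R hwR hy₃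
        (by linarith [himg w hwR]) hjoin, ?_⟩
    have h1 := (hqi w₃ w).1
    have h2 : K * ((m:ℝ) + C) ≤ (⌈K * ((m:ℝ) + C)⌉₊ : ℝ) := Nat.le_ceil _
    have h3 : (m:ℝ) + C < dist w₃ w / K := by
      rw [lt_div_iff₀ hK0]; nlinarith
    show (m:ℝ) < dist (q w₃) (q w)
    linarith
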